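/- Fix n ≥ 1, a directed graph G = (V, E) on the node set V = {x_1, …, x_n}, a unital quantale Σ with multiplication ⊗ and unit 1̄, and edge weights wt(x_i, x_j) ∈ Σ for each edge (x_i, x_j) ∈ E, and let G' be the weighted directed graph of the construction described in the context. Then for all nodes x_i, x_j ∈ V: d_G(x_i, x_j) = d_{G'}(⟨x_i, x_i⟩, ⟨x_j, x_j⟩). -/

import Mathlib

/-- A path from `u` to `v` in the directed graph with edge relation `E`. -/
def IsPath {V : Type*} (E : V → V → Prop) (u v : V) (l : List V) : Prop :=
  l ≠ [] ∧ l.head? = some u ∧ l.getLast? = some v ∧ l.Chain' E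

/-- The weight of a path: the ordered product of the weights of its edges,
`1` for a 0-length path. -/
def pathWeight {V M : Type*} [Monoid M] (wt : V → V → M) (l : List V) : M :=
  ((l.zip l.tail).map fun p => wt p.1 p.2).prod

/-- The algebraic distance: supremum of the weights of all paths from `u` to `v`. -/
def gdist {V Q : Type*} [CompleteLattice Q] [Monoid Q]
    (E : V → V → Prop) (wt : V → V → Q) (u v : V) : Q :=
  ⨆ l ∈ {l : List V | IsPath E u v l}, pathWeight wt l

/-- Nodes of the graph G'': `Sum.inl i` is x_{i+1}, `Sum.inr i` is y_{i+1}. -/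
abbrev DoubleV (n : ℕ) := Fin n ⊕ Fin n

/-- Nodes of the product graph G': pairs of nodes of G''. -/
abbrev ProdV (n : ℕ) := DoubleV n × DoubleV n

/-- The edge relation of the product graph G' of the construction:
black edges ⟨x_i,y_j⟩ ↔ ⟨x_i,y_{j±1}⟩ and ⟨y_i,x_j⟩ ↔ ⟨y_{i±1},x_j⟩;
blue edges ⟨x_i,x_i⟩ → ⟨x_i,y_i⟩ and ⟨y_i,x_i⟩ → ⟨x_i,x_i⟩;
red edges ⟨x_i,y_j⟩ → ⟨x_i,x_j⟩ for (x_i,x_j) ∈ E;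
green edges ⟨x_i,x_j⟩ → ⟨y_i,x_j⟩ for i ≠ j. -/
def prodE {n : ℕ} (E : Fin n → Fin n → Prop) : ProdV n → ProdV n → Prop :=
  fun a b =>
    match a, b with
    | (Sum.inl i, Sum.inr j), (Sum.inl i', Sum.inr j') =>
        i = i' ∧ ((j : ℕ) + 1 = (j' : ℕ) ∨ (j' : ℕ) + 1 = (j : ℕ))   -- black
    | (Sum.inr i, Sum.inl j), (Sum.inr i', Sum.inl j') =>
        j = j' ∧ ((i : ℕ) + 1 = (i' : ℕ) ∨ (i' : ℕ) + 1 = (i : ℕ))   -- black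
    | (Sum.inl i, Sum.inl j), (Sum.inl i', Sum.inr j') =>
        i = j ∧ i' = i ∧ j' = i                                       -- blue
    | (Sum.inr i, Sum.inl j), (Sum.inl i', Sum.inl j') =>
        i = j ∧ i' = i ∧ j' = i                                       -- blue
    | (Sum.inl i, Sum.inr j), (Sum.inl i', Sum.inl j') =>
        E i j ∧ i' = i ∧ j' = j                                       -- red
    | (Sum.inl i, Sum.inl j), (Sum.inr i', Sum.inl j') =>
        i ≠ j ∧ i' = i ∧ j' = j                                       -- green
    | _, _ => False

/-- The weight function of the product graph G': the red edge ⟨x_i,y_j⟩ → ⟨x_i,x_j⟩ has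
weight wt(x_i, x_j); every other edge has weight 1̄. -/
def prodWt {n : ℕ} {M : Type*} [Monoid M] (wt : Fin n → Fin n → M) :
    ProdV n → ProdV n → M :=
  fun a b =>
    match a, b with
    | (Sum.inl i, Sum.inr _), (Sum.inl _, Sum.inl j) => wt i j
    | _, _ => 1


lemma getLast?_cons_of_ne_nil' {α : Type*} {l : List α} (a : α) (h : l ≠ []) :
    (a :: l).getLast? = l.getLast? := by
  obtain ⟨c, t, rfl⟩ := List.exists_cons_of_ne_nil h
  rw [List.getLast?_cons_cons]

section generic
variable {V : Type*} {M : Type*} [Monoid M] {wt : V → V → M} {E : V → V → Prop}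

lemma pathWeight_nil : pathWeight wt ([] : List V) = 1 := rfl

lemma pathWeight_singleton (a : V) : pathWeight wt [a] = 1 := rfl

lemma pathWeight_cons_cons (a b : V) (t : List V) :
    pathWeight wt (a::b::t) = wt a b * pathWeight wt (b::t) := by
  simp [pathWeight]

lemma pathWeight_eq_one {l : List V} (h : ∀ p ∈ l.zip l.tail, wt p.1 p.2 = 1) :
    pathWeight wt l = 1 := by
  unfold pathWeight
  apply List.prod_eq_one
  intro x hx
  obtain ⟨p, hp, rfl⟩ := List.mem_map.1 hx
  exact h p hp

lemma pathWeight_append (v : V) (t : List V) :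
    ∀ (l : List V) (a : V), (a::l).getLast? = some v →
    pathWeight wt ((a::l) ++ t) = pathWeight wt (a::l) * pathWeight wt (v::t) := by
  intro l
  induction l with
  | nil =>
    intro a h
    simp at h
    subst h
    simp [pathWeight_singleton]
  | cons b l ih =>
    intro a h
    rw [List.getLast?_cons_cons] at h
    have := ih b h
    rw [List.cons_append, pathWeight_cons_cons, List.cons_append] at *
    rw [pathWeight_cons_cons, this, mul_assoc]

lemma isPath_append {u v w : V} {l1 l2 : List V}
    (h1 : IsPath E u v l1) (h2 : IsPath E v w l2) :
    IsPath E u w (l1 ++ l2.tail) ∧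
      ∀ {M : Type*} [Monoid M], ∀ wt : V → V → M,
        pathWeight wt (l1 ++ l2.tail) = pathWeight wt l1 * pathWeight wt l2 := by
  obtain ⟨hne1, hh1, hl1, hc1⟩ := h1
  obtain ⟨hne2, hh2, hl2, hc2⟩ := h2
  obtain ⟨a, l1, rfl⟩ := List.exists_cons_of_ne_nil hne1
  obtain ⟨b, t, rfl⟩ := List.exists_cons_of_ne_nil hne2
  simp only [List.head?_cons, Option.some.injEq] at hh1 hh2
  subst hh1; subst hh2
  refine ⟨⟨by simp, ?_, ?_, ?_⟩, ?_⟩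
  · simp
  · cases t with
    | nil => simp at hl2; subst hl2; simpa using hl1
    | cons c t =>
      rw [List.tail_cons, List.getLast?_append]
      rw [List.getLast?_cons_cons] at hl2
      simp [hl2]
  · rw [List.tail_cons, List.Chain', List.isChain_append]
    refine ⟨hc1, hc2.tail, ?_⟩
    intro x hx y hy
    rw [hl1] at hx
    simp at hx; subst hx
    rcases t with _ | ⟨c, t⟩
    · simp at hy
    · simp at hy; subst hy
      exact hc2.rel_head
  · intro M _ wt
    rw [List.tail_cons, pathWeight_append b t _ a hl1]

lemma le_gdist {Q : Type*} [CompleteLattice Q] [Monoid Q] {wt : V → V → Q}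
    {u v : V} {l : List V} (h : IsPath E u v l) :
    pathWeight wt l ≤ gdist E wt u v :=
  le_biSup _ h

lemma gdist_le_gdist {V' : Type*} {Q : Type*} [CompleteLattice Q] [Monoid Q]
    {wt : V → V → Q} {E' : V' → V' → Prop} {wt' : V' → V' → Q}
    {u v : V} {u' v' : V'}
    (h : ∀ l, IsPath E u v l → ∃ l', IsPath E' u' v' l' ∧ pathWeight wt' l' = pathWeight wt l) :
    gdist E wt u v ≤ gdist E' wt' u' v' := by
  refine iSup₂_le fun l hl => ?_
  obtain ⟨l', hl', hw⟩ := h l hl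
  rw [← hw]
  exact le_gdist hl'

end generic


def bstep (x y : ℕ) : Prop := x + 1 = y ∨ y + 1 = x

def upL (p : ℕ) : ℕ → List ℕ
  | 0 => [p]
  | k+1 => p :: upL (p+1) k

lemma upL_ne_nil (p k : ℕ) : upL p k ≠ [] := by cases k <;> simp [upL]

lemma head?_upL (p k : ℕ) : (upL p k).head? = some p := by cases k <;> simp [upL]

lemma getLast?_upL (p : ℕ) : ∀ k, (upL p k).getLast? = some (p + k) := by
  suffices h : ∀ k p, (upL p k).getLast? = some (p + k) by intro k; exact h k p
  intro k
  induction k with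
  | zero => intro p; simp [upL]
  | succ k ih =>
    intro p
    obtain ⟨c, t, hct⟩ := List.exists_cons_of_ne_nil (upL_ne_nil (p+1) k)
    rw [upL, hct, List.getLast?_cons_cons, ← hct, ih]
    congr 1
    omega

lemma chain'_upL (p : ℕ) : ∀ k, ∀ q, (upL q k).Chain' bstep := by
  intro k
  induction k with
  | zero => intro q; simp [upL, List.Chain', List.isChain_singleton]
  | succ k ih =>
    intro q
    rw [upL, List.Chain', List.isChain_cons]
    refine ⟨?_, ih (q+1)⟩
    intro y hy
    rw [head?_upL] at hy
    simp at hy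
    subst hy
    exact Or.inl rfl

lemma mem_upL {x : ℕ} : ∀ {k p : ℕ}, x ∈ upL p k → p ≤ x ∧ x ≤ p + k := by
  intro k
  induction k with
  | zero => intro p h; simp [upL] at h; omega
  | succ k ih =>
    intro p h
    rw [upL, List.mem_cons] at h
    rcases h with rfl | h
    · omega
    · have := ih h; omega

def walkN (p q : ℕ) : List ℕ := if p ≤ q then upL p (q - p) else (upL q (p - q)).reverse

lemma walkN_ne_nil (p q : ℕ) : walkN p q ≠ [] := by
  unfold walkN; split <;> simp [upL_ne_nil]

lemma head?_walkN (p q : ℕ) : (walkN p q).head? = some p := by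
  unfold walkN; split
  · exact head?_upL _ _
  · rw [List.head?_reverse, getLast?_upL]
    congr 1; omega

lemma getLast?_walkN (p q : ℕ) : (walkN p q).getLast? = some q := by
  unfold walkN; split
  · rw [getLast?_upL]; congr 1; omega
  · rw [List.getLast?_reverse, head?_upL]

lemma chain'_walkN (p q : ℕ) : (walkN p q).Chain' bstep := by
  unfold walkN; split
  · exact chain'_upL p _ _
  · rw [List.Chain', List.isChain_reverse]
    apply (chain'_upL q _ _).imp
    intro a b h
    unfold bstep at *
    tauto

lemma mem_walkN {x p q : ℕ} (h : x ∈ walkN p q) : x ≤ max p q := by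
  unfold walkN at h
  split at h
  · have := mem_upL h; omega
  · rw [List.mem_reverse] at h; have := mem_upL h; omega

lemma chain'_imp_mem {α : Type*} {R S : α → α → Prop} :
    ∀ {l : List α}, l.Chain' R → (∀ x ∈ l, ∀ y ∈ l, R x y → S x y) → l.Chain' S := by
  intro l
  induction l with
  | nil => intro _ _; exact List.isChain_nil
  | cons a t ih =>
    intro h hm
    rw [List.Chain', List.isChain_cons] at h ⊢
    refine ⟨?_, ih h.2 fun x hx y hy => hm x (by simp [hx]) y (by simp [hy])⟩
    intro y hy
    exact hm a (by simp) y (by simp [List.mem_of_mem_head? hy]) (h.1 y hy)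

variable {n : ℕ}

def toF (a : Fin n) (k : ℕ) : Fin n := ⟨min k (n-1), by have := a.isLt; omega⟩

def walkF (a b : Fin n) : List (Fin n) := (walkN a.val b.val).map (toF a)

lemma toF_val {a : Fin n} {k : ℕ} (h : k < n) : (toF a k).val = k := by
  simp [toF]; omega

lemma mem_walkN_lt {a b : Fin n} {x : ℕ} (h : x ∈ walkN a.val b.val) : x < n := by
  have := mem_walkN h
  have := a.isLt; have := b.isLt
  omega

lemma walkF_ne_nil (a b : Fin n) : walkF a b ≠ [] := by
  simp [walkF, walkN_ne_nil]

lemma head?_walkF (a b : Fin n) : (walkF a b).head? = some a := by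
  rw [walkF, List.head?_map, head?_walkN]
  simp only [Option.map_some]
  congr 1
  exact Fin.ext (toF_val a.isLt)

lemma getLast?_walkF (a b : Fin n) : (walkF a b).getLast? = some b := by
  rw [walkF, List.getLast?_map, getLast?_walkN]
  simp only [Option.map_some]
  congr 1
  exact Fin.ext (toF_val b.isLt)

lemma chain'_walkF (a b : Fin n) :
    (walkF a b).Chain' (fun x y : Fin n => (x.val + 1 = y.val ∨ y.val + 1 = x.val)) := by
  rw [walkF, List.Chain', List.isChain_map]
  apply chain'_imp_mem (chain'_walkN a.val b.val)
  intro x hx y hy h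
  rw [toF_val (mem_walkN_lt hx), toF_val (mem_walkN_lt hy)]
  exact h

section lift
variable {n : ℕ} {M : Type*} [Monoid M] {E : Fin n → Fin n → Prop} {wt : Fin n → Fin n → M}

lemma prodWt_tgt_inr (y : ProdV n) (c : DoubleV n) (d : Fin n) :
    prodWt wt y (c, Sum.inr d) = 1 := by
  rcases y with ⟨y1|y1, y2|y2⟩ <;> rcases c with c|c <;> rfl

lemma prodWt_src_inl2 (c : DoubleV n) (d : Fin n) (z : ProdV n) :
    prodWt wt (c, Sum.inl d) z = 1 := by
  rcases z with ⟨z1|z1, z2|z2⟩ <;> rcases c with c|c <;> rfl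

lemma prodWt_src_inr1 (c : Fin n) (d : DoubleV n) (z : ProdV n) :
    prodWt wt (Sum.inr c, d) z = 1 := by
  rcases z with ⟨z1|z1, z2|z2⟩ <;> rcases d with d|d <;> rfl

lemma edge_lift (a b : Fin n) (hE : E a b) :
    ∃ l', IsPath (prodE E) (Sum.inl a, Sum.inl a) (Sum.inl b, Sum.inl b) l' ∧
      pathWeight (prodWt wt) l' = wt a b := by
  set g1 : Fin n → ProdV n := fun k => (Sum.inl a, Sum.inr k) with hg1
  set P1 : List (ProdV n) :=
    ((Sum.inl a, Sum.inl a) :: (walkF a b).map g1) ++ [(Sum.inl a, Sum.inl b)] with hP1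
  have hmapne : (walkF a b).map g1 ≠ [] := by simp [walkF_ne_nil]
  have hlast1 : ((Sum.inl a, Sum.inl a) :: (walkF a b).map g1).getLast? = some (g1 b) := by
    rw [getLast?_cons_of_ne_nil' _ hmapne, List.getLast?_map, getLast?_walkF]
    rfl
  have hpath1 : IsPath (prodE E) (Sum.inl a, Sum.inl a) (Sum.inl a, Sum.inl b) P1 := by
    refine ⟨by simp [hP1], by simp [hP1], ?_, ?_⟩
    · rw [hP1, List.getLast?_append]
      rfl
    · rw [hP1, List.Chain', List.isChain_append]
      refine ⟨?_, by simp, ?_⟩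
      · rw [List.isChain_cons]
        constructor
        · intro y hy
          rw [List.head?_map, head?_walkF] at hy
          simp at hy
          subst hy
          exact ⟨rfl, rfl, rfl⟩
        · rw [List.isChain_map]
          apply (chain'_walkF a b).imp
          intro x y h
          exact ⟨rfl, h⟩
      · intro x hx y hy
        rw [hlast1] at hx
        simp at hx hy
        subst hx; subst hy
        exact ⟨hE, rfl, rfl⟩
  have hw1 : pathWeight (prodWt wt) P1 = wt a b := by
    rw [hP1, pathWeight_append (g1 b) _ _ _ hlast1, pathWeight_cons_cons,
      pathWeight_singleton, pathWeight_eq_one, mul_one, one_mul]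
    · rfl
    · intro p hp
      have h2 := (List.of_mem_zip (a := p.1) (b := p.2) (by simpa using hp)).2
      simp only [List.tail_cons, List.mem_map] at h2
      obtain ⟨k, _, hk⟩ := h2
      rw [show p = (p.1, p.2) from rfl, ← hk]
      exact prodWt_tgt_inr _ _ _
  by_cases hab : a = b
  · subst hab
    exact ⟨P1, hpath1, hw1⟩
  · set g2 : Fin n → ProdV n := fun k => (Sum.inr k, Sum.inl b) with hg2
    set P2 : List (ProdV n) :=
      ((Sum.inl a, Sum.inl b) :: (walkF a b).map g2) ++ [(Sum.inl b, Sum.inl b)] with hP2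
    have hmapne2 : (walkF a b).map g2 ≠ [] := by simp [walkF_ne_nil]
    have hlast2 : ((Sum.inl a, Sum.inl b) :: (walkF a b).map g2).getLast? = some (g2 b) := by
      rw [getLast?_cons_of_ne_nil' _ hmapne2, List.getLast?_map, getLast?_walkF]
      rfl
    have hpath2 : IsPath (prodE E) (Sum.inl a, Sum.inl b) (Sum.inl b, Sum.inl b) P2 := by
      refine ⟨by simp [hP2], by simp [hP2], ?_, ?_⟩
      · rw [hP2, List.getLast?_append]
        rfl
      · rw [hP2, List.Chain', List.isChain_append]
        refine ⟨?_, by simp, ?_⟩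
        · rw [List.isChain_cons]
          constructor
          · intro y hy
            rw [List.head?_map, head?_walkF] at hy
            simp at hy
            subst hy
            exact ⟨hab, rfl, rfl⟩
          · rw [List.isChain_map]
            apply (chain'_walkF a b).imp
            intro x y h
            exact ⟨rfl, h⟩
        · intro x hx y hy
          rw [hlast2] at hx
          simp at hx hy
          subst hx; subst hy
          exact ⟨rfl, rfl, rfl⟩
    have hw2 : pathWeight (prodWt wt) P2 = 1 := by
      apply pathWeight_eq_one
      intro p hp
      have h1 := (List.of_mem_zip (a := p.1) (b := p.2) (by simpa using hp)).1
      rw [hP2] at h1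
      simp only [List.mem_append, List.mem_cons, List.mem_map, List.mem_singleton] at h1
      rw [show p = (p.1, p.2) from rfl]
      rcases h1 with (h1 | ⟨k, _, hk⟩) | (h1 | h1)
      · rw [h1]; exact prodWt_src_inl2 _ _ _
      · rw [← hk]; exact prodWt_src_inr1 _ _ _
      · rw [h1]; exact prodWt_src_inl2 _ _ _
      · simp at h1
    obtain ⟨hpath, hw⟩ := isPath_append hpath1 hpath2
    exact ⟨P1 ++ P2.tail, hpath, by rw [hw (prodWt wt), hw1, hw2, mul_one]⟩

lemma lift_path : ∀ (l : List (Fin n)) (a b : Fin n), IsPath E a b l →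
    ∃ l', IsPath (prodE E) (Sum.inl a, Sum.inl a) (Sum.inl b, Sum.inl b) l' ∧
      pathWeight (prodWt wt) l' = pathWeight wt l := by
  intro l
  induction l with
  | nil => intro a b h; exact absurd rfl h.1
  | cons c t ih =>
    intro a b h
    obtain ⟨-, hh, hl, hc⟩ := h
    simp only [List.head?_cons, Option.some.injEq] at hh
    subst hh
    cases t with
    | nil =>
      simp at hl
      subst hl
      exact ⟨[(Sum.inl c, Sum.inl c)], ⟨by simp, by simp, by simp, List.isChain_singleton _⟩,
        by rw [pathWeight_singleton, pathWeight_singleton]⟩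
    | cons d t =>
      have hcd : E c d := hc.rel_head
      obtain ⟨l1, hp1, hw1⟩ := edge_lift (wt := wt) c d hcd
      rw [List.getLast?_cons_cons] at hl
      obtain ⟨l2, hp2, hw2⟩ := ih d b ⟨by simp, by simp, hl, hc.tail⟩
      obtain ⟨hpath, hw⟩ := isPath_append hp1 hp2
      refine ⟨l1 ++ l2.tail, hpath, ?_⟩
      rw [hw (prodWt wt), hw1, hw2, pathWeight_cons_cons]

end lift

section proj
variable {n : ℕ} {M : Type*} [Monoid M] {E : Fin n → Fin n → Prop} {wt : Fin n → Fin n → M}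

def projN {n : ℕ} : ProdV n → Fin n :=
  fun a =>
    match a with
    | (Sum.inl i, Sum.inr _) => i
    | (_, Sum.inl j) => j
    | (Sum.inr i, Sum.inr _) => i

lemma proj_step {u w : ProdV n} (h : prodE E u w) :
    (prodWt wt u w = 1 ∧ projN w = projN u) ∨
      (E (projN u) (projN w) ∧ prodWt wt u w = wt (projN u) (projN w)) := by
  obtain ⟨u1 | u1, u2 | u2⟩ := u <;> obtain ⟨w1 | w1, w2 | w2⟩ := w <;>
    simp only [prodE] at h <;>
    first
      | exact h.elim
      | (obtain ⟨h1, h2, h3⟩ := h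
         subst h2; subst h3
         first
           | (subst h1; exact Or.inl ⟨rfl, rfl⟩)
           | exact Or.inl ⟨rfl, rfl⟩
           | exact Or.inr ⟨h1, rfl⟩)
      | (obtain ⟨h1, h2⟩ := h
         subst h1
         exact Or.inl ⟨rfl, rfl⟩)

lemma proj_path : ∀ (l' : List (ProdV n)) (u v : ProdV n), IsPath (prodE E) u v l' →
    ∃ l, IsPath E (projN u) (projN v) l ∧ pathWeight wt l = pathWeight (prodWt wt) l' := by
  intro l'
  induction l' with
  | nil => intro u v h; exact absurd rfl h.1
  | cons a t ih =>
    intro u v h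
    obtain ⟨-, hh, hl, hc⟩ := h
    simp only [List.head?_cons, Option.some.injEq] at hh
    subst hh
    cases t with
    | nil =>
      simp at hl
      subst hl
      exact ⟨[projN a], ⟨by simp, by simp, by simp, List.isChain_singleton _⟩,
        by rw [pathWeight_singleton, pathWeight_singleton]⟩
    | cons b t =>
      have hab : prodE E a b := hc.rel_head
      rw [List.getLast?_cons_cons] at hl
      obtain ⟨l, ⟨hne, hlh, hll, hlc⟩, hw⟩ := ih b v ⟨by simp, by simp, hl, hc.tail⟩
      rcases proj_step (wt := wt) hab with ⟨hw1, hpr⟩ | ⟨hE1, hw1⟩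
      · refine ⟨l, ⟨hne, by rw [hlh, hpr], hll, hlc⟩, ?_⟩
        rw [pathWeight_cons_cons, hw1, one_mul, hw]
      · obtain ⟨c, t', rfl⟩ := List.exists_cons_of_ne_nil hne
        simp only [List.head?_cons, Option.some.injEq] at hlh
        subst hlh
        refine ⟨projN a :: projN b :: t', ⟨by simp, by simp, ?_, ?_⟩, ?_⟩
        · rw [List.getLast?_cons_cons]
          exact hll
        · rw [List.Chain', List.isChain_cons_cons]
          exact ⟨hE1, hlc⟩
        · rw [pathWeight_cons_cons, pathWeight_cons_cons (wt := prodWt wt), hw, hw1]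

end proj


/-- For all nodes x_i, x_j of G:
d_G(x_i, x_j) = d_{G'}(⟨x_i, x_i⟩, ⟨x_j, x_j⟩), with weights in a unital quantale. -/
theorem stmt_15 {Q : Type*} [CompleteLattice Q] [Monoid Q]
    (hdl : ∀ (a : Q) (S : Set Q), a * sSup S = ⨆ s ∈ S, a * s)
    (hdr : ∀ (a : Q) (S : Set Q), sSup S * a = ⨆ s ∈ S, s * a)
    (n : ℕ) (hn : 1 ≤ n)
    (E : Fin n → Fin n → Prop) (wt : Fin n → Fin n → Q) (i j : Fin n) :
    gdist E wt i j =
      gdist (prodE E) (prodWt wt) (Sum.inl i, Sum.inl i) (Sum.inl j, Sum.inl j) := by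
  apply le_antisymm
  · exact gdist_le_gdist fun l hl => lift_path l i j hl
  · exact gdist_le_gdist fun l' hl' => proj_path l' _ _ hl'
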